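/- Let (X, T) and (Y, S) be topological dynamical systems and f ∈ C(X × Y). If (Y, S) has the periodic specification property and (X, T) has at least one periodic point (Per_T(X) ≠ ∅), then β(f) ≥ δ(f). In particular this holds when both (X, T) and (Y, S) have the periodic specification property. -/

import Mathlib

open MeasureTheory Filter Topology
open scoped ENNReal NNReal

noncomputable section

/-- Birkhoff average `A_k f(x, y) = (1/k) Σ_{j<k} f(T^j x, S^j y)`. -/
def birk2 {X Y : Type*} (T : X → X) (S : Y → Y) (f : X × Y → ℝ) (k : ℕ) (x : X) (y : Y) : ℝ :=
  (k : ℝ)⁻¹ * ∑ j ∈ Finset.range k, f ((Prod.map T S)^[j] (x, y))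

/-- The set of invariant Borel probability measures of a map. -/
def invMeas {Z : Type*} [MeasurableSpace Z] (U : Z → Z) : Set (ProbabilityMeasure Z) :=
  {μ | μ.toMeasure.map U = μ.toMeasure}

/-- `ψ_f(ν) = min { ∫ f dλ : λ ∈ M_{T×S}(X × Y), (π_Y)_* λ = ν }`. -/
def psi2 {X Y : Type*} [MeasurableSpace X] [MeasurableSpace Y]
    (T : X → X) (S : Y → Y) (f : X × Y → ℝ) (ν : ProbabilityMeasure Y) : ℝ :=
  sInf {r | ∃ lam ∈ invMeas (Prod.map T S), lam.toMeasure.map Prod.snd = ν.toMeasure ∧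
    r = ∫ p, f p ∂lam.toMeasure}

/-- `α(f) = sup_{ν ∈ M_S(Y)} ψ_f(ν)`. -/
def alpha2 {X Y : Type*} [MeasurableSpace X] [MeasurableSpace Y]
    (T : X → X) (S : Y → Y) (f : X × Y → ℝ) : ℝ :=
  sSup {r | ∃ ν ∈ invMeas S, r = psi2 T S f ν}

/-- `R_f`: points `(x, y)` whose Birkhoff averages converge. -/
def reg2 {X Y : Type*} (T : X → X) (S : Y → Y) (f : X × Y → ℝ) : Set (X × Y) :=
  {p | ∃ L : ℝ, Tendsto (fun k : ℕ => birk2 T S f k p.1 p.2) atTop (𝓝 L)}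

/-- `β(f) = sup_{y ∈ π_Y(R_f)} inf_{(x,y) ∈ R_f} lim_k A_k f(x, y)`. -/
def beta2 {X Y : Type*} (T : X → X) (S : Y → Y) (f : X × Y → ℝ) : ℝ :=
  sSup {r | ∃ y : Y, (∃ x : X, (x, y) ∈ reg2 T S f) ∧
    r = sInf {L | ∃ x : X, (x, y) ∈ reg2 T S f ∧
      Tendsto (fun k : ℕ => birk2 T S f k x y) atTop (𝓝 L)}}

/-- `γ(f) = sup_{y ∈ Y} inf_{x ∈ X} limsup_k A_k f(x, y)`. -/
def gamma2 {X Y : Type*} (T : X → X) (S : Y → Y) (f : X × Y → ℝ) : ℝ :=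
  ⨆ y : Y, ⨅ x : X, limsup (fun k : ℕ => birk2 T S f k x y) atTop

/-- `δ(f) = limsup_k max_{y ∈ Y} min_{x ∈ X} A_k f(x, y)`. -/
def delta2 {X Y : Type*} (T : X → X) (S : Y → Y) (f : X × Y → ℝ) : ℝ :=
  limsup (fun k : ℕ => ⨆ y : Y, ⨅ x : X, birk2 T S f k x y) atTop

/-- The invariant probability measures supported on a single closed (periodic) orbit. -/
def Mco {Z : Type*} [MeasurableSpace Z] (U : Z → Z) : Set (ProbabilityMeasure Z) :=
  {μ | ∃ (k : ℕ) (z : Z), 0 < k ∧ U^[k] z = z ∧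
    μ.toMeasure = (k : ℝ≥0∞)⁻¹ • ∑ j ∈ Finset.range k, Measure.dirac (U^[j] z)}

/-- `α_per(f)`: as `α(f)`, but with both measures ranging over closed-orbit measures. -/
def alphaPer2 {X Y : Type*} [MeasurableSpace X] [MeasurableSpace Y]
    (T : X → X) (S : Y → Y) (f : X × Y → ℝ) : ℝ :=
  sSup {r | ∃ ν ∈ Mco S,
    r = sInf {t | ∃ lam ∈ Mco (Prod.map T S), lam.toMeasure.map Prod.snd = ν.toMeasure ∧
      t = ∫ p, f p ∂lam.toMeasure}}

/-- The set of periodic points. -/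
def perPts {Z : Type*} (U : Z → Z) : Set Z :=
  {z | ∃ t : ℕ, 0 < t ∧ U^[t] z = z}

/-- `δ_per(f) = limsup_k sup_{y ∈ Per_S(Y)} inf_{x ∈ Per_T(X)} A_k f(x, y)`. -/
def deltaPer2 {X Y : Type*} (T : X → X) (S : Y → Y) (f : X × Y → ℝ) : ℝ :=
  limsup (fun k : ℕ => sSup {r | ∃ y ∈ perPts S,
    r = sInf {t | ∃ x ∈ perPts T, t = birk2 T S f k x y}}) atTop

/-- The `j`-th power (`j : ℤ`) of a homeomorphism, applied to a point. -/
def zit {X : Type*} [TopologicalSpace X] (T : X ≃ₜ X) (j : ℤ) (x : X) : X :=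
  (T.toEquiv ^ j) x

/-- The specification property for `(X, T)` (with respect to the metric of `X`):
for every `η > 0` there is `D = D(η)` such that every `D`-spaced specification
`ξ = (x_i, [a_i, b_i])_{i=1}^n` admits an `η`-tracing point. -/
def SpecProp {X : Type*} [MetricSpace X] (T : X ≃ₜ X) : Prop :=
  ∀ η : ℝ, 0 < η → ∃ D : ℕ, 0 < D ∧
    ∀ (n : ℕ) (x : Fin (n + 1) → X) (a b : Fin (n + 1) → ℤ),
      (∀ i, a i ≤ b i) →
      (∀ i : Fin n, (D : ℤ) ≤ a i.succ - b i.castSucc) →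
      ∃ x' : X, ∀ i : Fin (n + 1), ∀ j : ℤ, a i ≤ j → j ≤ b i →
        dist (zit T j x') (zit T j (x i)) < η

/-- The periodic specification property for `(X, T)`: as `SpecProp`, but the tracing
point can moreover be chosen of period `b_n - a_1 + D`. -/
def PerSpecProp {X : Type*} [MetricSpace X] (T : X ≃ₜ X) : Prop :=
  ∀ η : ℝ, 0 < η → ∃ D : ℕ, 0 < D ∧
    ∀ (n : ℕ) (x : Fin (n + 1) → X) (a b : Fin (n + 1) → ℤ),
      (∀ i, a i ≤ b i) →
      (∀ i : Fin n, (D : ℤ) ≤ a i.succ - b i.castSucc) →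
      ∃ x' : X, (∀ i : Fin (n + 1), ∀ j : ℤ, a i ≤ j → j ≤ b i →
          dist (zit T j x') (zit T j (x i)) < η) ∧
        zit T (b (Fin.last n) - a 0 + (D : ℤ)) x' = x'


section Stmt18Aux

open Filter

lemma zit_natCast' {Z : Type*} [TopologicalSpace Z] (T : Z ≃ₜ Z) (n : ℕ) (z : Z) :
    zit T (n : ℤ) z = (⇑T)^[n] z := by
  rw [zit, zpow_natCast, ← Equiv.Perm.iterate_eq_pow]
  rfl

lemma periodic_avg_tendsto' (g : ℕ → ℝ) (q : ℕ) (hq : 0 < q)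
    (hper : ∀ j, g (j + q) = g j) :
    Tendsto (fun n : ℕ => (n:ℝ)⁻¹ * ∑ j ∈ Finset.range n, g j) atTop
      (𝓝 ((q:ℝ)⁻¹ * ∑ j ∈ Finset.range q, g j)) := by
  set c : ℝ := (q:ℝ)⁻¹ * ∑ j ∈ Finset.range q, g j with hc
  set h : ℕ → ℝ := fun j => g j - c with hh
  have hqR : (0:ℝ) < (q:ℝ) := by exact_mod_cast hq
  have hhper : ∀ m j, h (j + q * m) = h j := by
    intro m
    induction m with
    | zero => intro j; simp
    | succ m ih =>
      intro j
      have : j + q * (m+1) = (j + q) + q * m := by ring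
      rw [this, ih, hh]
      simp [hper j]
  have hhq : ∑ j ∈ Finset.range q, h j = 0 := by
    simp only [hh, Finset.sum_sub_distrib, Finset.sum_const, Finset.card_range, nsmul_eq_mul, hc]
    field_simp
    ring
  have hblock : ∀ m : ℕ, ∑ j ∈ Finset.range (q * m), h j = 0 := by
    intro m
    induction m with
    | zero => simp
    | succ m ih =>
      have : q * (m+1) = q * m + q := by ring
      rw [this, Finset.sum_range_add, ih, zero_add]
      calc ∑ i ∈ Finset.range q, h (q * m + i)
          = ∑ i ∈ Finset.range q, h i := by
            refine Finset.sum_congr rfl fun i _ => ?_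
            rw [add_comm, hhper]
        _ = 0 := hhq
  set B : ℝ := ∑ j ∈ Finset.range q, |h j| with hB
  have hsum : ∀ n : ℕ, |∑ j ∈ Finset.range n, h j| ≤ B := by
    intro n
    have hn : q * (n / q) + n % q = n := Nat.div_add_mod n q
    calc |∑ j ∈ Finset.range n, h j|
        = |∑ j ∈ Finset.range (q * (n / q) + n % q), h j| := by rw [hn]
      _ = |∑ i ∈ Finset.range (n % q), h (q * (n / q) + i)| := by
          rw [Finset.sum_range_add, hblock, zero_add]
      _ = |∑ i ∈ Finset.range (n % q), h i| := by
          congr 1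
          refine Finset.sum_congr rfl fun i _ => ?_
          rw [add_comm, hhper]
      _ ≤ ∑ i ∈ Finset.range (n % q), |h i| := Finset.abs_sum_le_sum_abs _ _
      _ ≤ B := by
          refine Finset.sum_le_sum_of_subset_of_nonneg ?_ (fun i _ _ => abs_nonneg _)
          exact Finset.range_subset_range.2 (le_of_lt (Nat.mod_lt n hq))
  have h0 : Tendsto (fun n : ℕ => (n:ℝ)⁻¹ * ∑ j ∈ Finset.range n, h j) atTop (𝓝 0) := by
    apply squeeze_zero_norm' (a := fun n : ℕ => B / n)
    · filter_upwards [eventually_gt_atTop 0] with n hn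
      have hnR : (0:ℝ) < (n:ℝ) := by exact_mod_cast hn
      rw [Real.norm_eq_abs, abs_mul, abs_inv, abs_of_pos hnR, div_eq_inv_mul]
      exact mul_le_mul_of_nonneg_left (hsum n) (by positivity)
    · exact tendsto_const_div_atTop_nhds_zero_nat B
  have heq : ∀ n : ℕ, 0 < n → (n:ℝ)⁻¹ * ∑ j ∈ Finset.range n, g j
      = (n:ℝ)⁻¹ * ∑ j ∈ Finset.range n, h j + c := by
    intro n hn
    have hnR : (0:ℝ) ≠ (n:ℝ) := by positivity
    simp only [hh, Finset.sum_sub_distrib, Finset.sum_const, Finset.card_range, nsmul_eq_mul]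
    field_simp
    ring
  have := h0.add_const c
  rw [zero_add] at this
  refine this.congr' ?_
  filter_upwards [eventually_gt_atTop 0] with n hn
  exact (heq n hn).symm

end Stmt18Aux

/-- if `(Y, S)` has the periodic specification property and `(X, T)`
has at least one periodic point, then `β(f) ≥ δ(f)`.  (In particular this holds when
both systems have the periodic specification property.) -/
theorem stmt18
    {X Y : Type*}
    [MetricSpace X] [CompactSpace X] [Nonempty X]
    [MetricSpace Y] [CompactSpace Y] [Nonempty Y]
    (T : X ≃ₜ X) (S : Y ≃ₜ Y) (f : X × Y → ℝ) (hf : Continuous f)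
    (hspecY : PerSpecProp S) (hper : (perPts ⇑T).Nonempty) :
    delta2 (⇑T) (⇑S) f ≤ beta2 (⇑T) (⇑S) f := by
  classical
  obtain ⟨P0, -, hMb⟩ := isCompact_univ.exists_isMaxOn Set.univ_nonempty
    ((continuous_abs.comp hf).continuousOn)
  set M : ℝ := |f P0| with hMdef
  have hM : ∀ p : X × Y, |f p| ≤ M := fun p => hMb (Set.mem_univ p)
  have hM0 : (0:ℝ) ≤ M := abs_nonneg _
  -- Birkhoff averages in coordinates
  have hbirk : ∀ (n : ℕ) (x : X) (y : Y),
      birk2 (⇑T) (⇑S) f n x y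
        = (n:ℝ)⁻¹ * ∑ j ∈ Finset.range n, f ((⇑T)^[j] x, (⇑S)^[j] y) := by
    intro n x y
    unfold birk2
    congr 1
    refine Finset.sum_congr rfl fun j _ => ?_
    rw [Prod.map_iterate]
    rfl
  have habs : ∀ (n : ℕ) (x : X) (y : Y), |birk2 (⇑T) (⇑S) f n x y| ≤ M := by
    intro n x y
    rw [hbirk]
    rcases Nat.eq_zero_or_pos n with h0 | hn
    · subst h0; simpa using hM0
    · have hnR : (0:ℝ) < (n:ℝ) := by exact_mod_cast hn
      have h1 : |∑ j ∈ Finset.range n, f ((⇑T)^[j] x, (⇑S)^[j] y)| ≤ (n:ℝ) * M := by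
        calc |∑ j ∈ Finset.range n, f ((⇑T)^[j] x, (⇑S)^[j] y)|
            ≤ ∑ j ∈ Finset.range n, |f ((⇑T)^[j] x, (⇑S)^[j] y)| :=
              Finset.abs_sum_le_sum_abs _ _
          _ ≤ ∑ _j ∈ Finset.range n, M := Finset.sum_le_sum fun j _ => hM _
          _ = (n:ℝ) * M := by simp [mul_comm]
      rw [abs_mul, abs_inv, Nat.abs_cast]
      calc (n:ℝ)⁻¹ * |∑ j ∈ Finset.range n, f ((⇑T)^[j] x, (⇑S)^[j] y)|
          ≤ (n:ℝ)⁻¹ * ((n:ℝ) * M) := by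
            exact mul_le_mul_of_nonneg_left h1 (by positivity)
        _ = M := by field_simp
  have hbdd : ∀ (k : ℕ) (y : Y),
      BddBelow (Set.range fun x : X => birk2 (⇑T) (⇑S) f k x y) := by
    intro k y
    refine ⟨-M, ?_⟩
    rintro r ⟨x, rfl⟩
    exact (abs_le.1 (habs k x y)).1
  set G : ℕ → ℝ := fun k : ℕ => ⨆ y : Y, ⨅ x : X, birk2 (⇑T) (⇑S) f k x y with hGdef
  have hGb : ∀ k, |G k| ≤ M := by
    intro k
    have hub : ∀ y : Y, (⨅ x : X, birk2 (⇑T) (⇑S) f k x y) ≤ M := fun y =>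
      le_trans (ciInf_le (hbdd k y) (Classical.arbitrary X))
        (abs_le.1 (habs k (Classical.arbitrary X) y)).2
    have hlb : ∀ y : Y, -M ≤ ⨅ x : X, birk2 (⇑T) (⇑S) f k x y := fun y =>
      le_ciInf fun x => (abs_le.1 (habs k x y)).1
    rw [abs_le]
    constructor
    · exact le_trans (hlb (Classical.arbitrary Y))
        (le_ciSup ⟨M, by rintro r ⟨y, rfl⟩; exact hub y⟩ (Classical.arbitrary Y))
    · exact ciSup_le hub
  have hGbdd : IsBoundedUnder (· ≥ ·) atTop G :=
    isBoundedUnder_of ⟨-M, fun k => (abs_le.1 (hGb k)).1⟩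
  have hdelta : delta2 (⇑T) (⇑S) f = limsup G atTop := rfl
  set δ : ℝ := delta2 (⇑T) (⇑S) f with hδdef
  have hδM : δ ≤ M := by
    rw [hdelta]
    exact limsup_le_of_le hGbdd.isCoboundedUnder_le
      (Eventually.of_forall fun k => (abs_le.1 (hGb k)).2)
  -- main ε-argument
  have key : ∀ ε : ℝ, 0 < ε → δ ≤ beta2 (⇑T) (⇑S) f + 3 * ε := by
    intro ε hε
    have huc := CompactSpace.uniformContinuous_of_continuous hf
    rw [Metric.uniformContinuous_iff] at huc
    obtain ⟨η, hη, hηf⟩ := huc ε hε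
    obtain ⟨D, hD, hspec⟩ := hspecY η hη
    have hfreq : ∃ᶠ k in atTop, δ - ε < G k := by
      refine frequently_lt_of_lt_limsup hGbdd.isCoboundedUnder_le ?_
      rw [← hdelta]; linarith
    obtain ⟨k, hkK, hGk⟩ := frequently_atTop.mp hfreq (max 1 (Nat.ceil (2*(D:ℝ)*M/ε)))
    have hk1 : 1 ≤ k := le_trans (le_max_left _ _) hkK
    have hkε : 2*(D:ℝ)*M ≤ (k:ℝ) * ε := by
      have h1 : (2*(D:ℝ)*M/ε) ≤ (Nat.ceil (2*(D:ℝ)*M/ε) : ℝ) := Nat.le_ceil _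
      have h2 : (Nat.ceil (2*(D:ℝ)*M/ε) : ℝ) ≤ (k:ℝ) := by
        exact_mod_cast le_trans (le_max_right _ _) hkK
      have := le_trans h1 h2
      rw [div_le_iff₀ hε] at this
      linarith
    -- choose a maximizing yk for time k
    have hy : ∃ yk : Y, δ - ε < ⨅ x : X, birk2 (⇑T) (⇑S) f k x yk := by
      by_contra hcon
      push_neg at hcon
      have : G k ≤ δ - ε := ciSup_le hcon
      linarith
    obtain ⟨yk, hyk⟩ := hy
    have hAk : ∀ x : X, δ - ε ≤ birk2 (⇑T) (⇑S) f k x yk := fun x =>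
      le_trans hyk.le (ciInf_le (hbdd k yk) x)
    -- periodic specification with a single block [0, k-1]
    obtain ⟨y', hytr, hyper⟩ := hspec 0 (fun _ => yk) (fun _ => 0) (fun _ => (k:ℤ) - 1)
      (fun _ => by show (0:ℤ) ≤ (k:ℤ) - 1; omega) (fun i => i.elim0)
    set P : ℕ := k - 1 + D with hPdef
    have hP1 : 0 < P := by omega
    have hyP : (⇑S)^[P] y' = y' := by
      have h1 := hyper
      rw [show ((fun _ : Fin 1 => (k:ℤ) - 1) (Fin.last 0) - (fun _ : Fin 1 => (0:ℤ)) 0 + (D:ℤ))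
          = ((P:ℕ) : ℤ) by show (k:ℤ) - 1 - 0 + (D:ℤ) = ((P:ℕ) : ℤ); rw [hPdef]; omega] at h1
      rwa [zit_natCast'] at h1
    have htr : ∀ s : ℕ, s < k → dist ((⇑S)^[s] y') ((⇑S)^[s] yk) < η := by
      intro s hs
      have h1 := hytr 0 (s:ℤ) (by positivity) (by omega)
      rwa [zit_natCast', zit_natCast'] at h1
    have hperS : ∀ t s : ℕ, (⇑S)^[s + t * P] y' = (⇑S)^[s] y' := by
      intro t
      induction t with
      | zero => intro s; simp
      | succ m ih =>
        intro s
        have he : s + (m+1) * P = (s + m * P) + P := by ring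
        rw [he, Function.iterate_add_apply, hyP]
        exact ih s
    -- blockwise estimate
    have hblock : ∀ (x : X) (t : ℕ),
        (k:ℝ) * (δ - 2*ε) - ((D:ℝ) - 1) * M ≤
          ∑ s ∈ Finset.range P, f ((⇑T)^[t*P + s] x, (⇑S)^[s] y') := by
      intro x t
      have hsplit : ∑ s ∈ Finset.range P, f ((⇑T)^[t*P + s] x, (⇑S)^[s] y')
          = (∑ s ∈ Finset.range k, f ((⇑T)^[t*P + s] x, (⇑S)^[s] y'))
            + ∑ s ∈ Finset.range (D-1), f ((⇑T)^[t*P + (k + s)] x, (⇑S)^[k + s] y') := by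
        rw [show P = k + (D-1) by omega, Finset.sum_range_add]
      have hmain : (k:ℝ) * (δ - 2*ε) ≤
          ∑ s ∈ Finset.range k, f ((⇑T)^[t*P + s] x, (⇑S)^[s] y') := by
        have hterm : ∀ s ∈ Finset.range k,
            f ((⇑T)^[t*P + s] x, (⇑S)^[s] yk) - ε ≤ f ((⇑T)^[t*P + s] x, (⇑S)^[s] y') := by
          intro s hs
          rw [Finset.mem_range] at hs
          have hd : dist (((⇑T)^[t*P + s] x, (⇑S)^[s] y') : X × Y)
              (((⇑T)^[t*P + s] x, (⇑S)^[s] yk) : X × Y) < η := by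
            rw [Prod.dist_eq]
            simp only [dist_self]
            exact max_lt hη (htr s hs)
          have := hηf hd
          rw [Real.dist_eq, abs_sub_lt_iff] at this
          linarith [this.2]
        have hsum2 : ∑ s ∈ Finset.range k, f ((⇑T)^[t*P + s] x, (⇑S)^[s] yk)
            = (k:ℝ) * birk2 (⇑T) (⇑S) f k ((⇑T)^[t*P] x) yk := by
          rw [hbirk]
          have hkR : (0:ℝ) < (k:ℝ) := by exact_mod_cast hk1
          rw [← mul_assoc, mul_inv_cancel₀ (ne_of_gt hkR), one_mul]
          refine Finset.sum_congr rfl fun s _ => ?_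
          congr 2
          rw [← Function.iterate_add_apply, add_comm]
        calc (k:ℝ) * (δ - 2*ε) = (k:ℝ) * (δ - ε) - (k:ℝ) * ε := by ring
          _ ≤ (k:ℝ) * birk2 (⇑T) (⇑S) f k ((⇑T)^[t*P] x) yk - (k:ℝ) * ε := by
              have hkR : (0:ℝ) ≤ (k:ℝ) := by positivity
              have := mul_le_mul_of_nonneg_left (hAk ((⇑T)^[t*P] x)) hkR
              linarith
          _ = ∑ s ∈ Finset.range k, f ((⇑T)^[t*P + s] x, (⇑S)^[s] yk)
                - ∑ _s ∈ Finset.range k, ε := by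
              rw [hsum2]; simp [mul_comm]
          _ = ∑ s ∈ Finset.range k, (f ((⇑T)^[t*P + s] x, (⇑S)^[s] yk) - ε) := by
              rw [Finset.sum_sub_distrib]
          _ ≤ ∑ s ∈ Finset.range k, f ((⇑T)^[t*P + s] x, (⇑S)^[s] y') :=
              Finset.sum_le_sum hterm
      have htail : -(((D:ℝ) - 1) * M) ≤
          ∑ s ∈ Finset.range (D-1), f ((⇑T)^[t*P + (k + s)] x, (⇑S)^[k + s] y') := by
        have : ∀ s ∈ Finset.range (D-1),
            -M ≤ f ((⇑T)^[t*P + (k + s)] x, (⇑S)^[k + s] y') := fun s _ =>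
          (abs_le.1 (hM _)).1
        calc -(((D:ℝ) - 1) * M) = ∑ _s ∈ Finset.range (D-1), (-M) := by
              simp [Nat.cast_sub hD, mul_comm]
          _ ≤ _ := Finset.sum_le_sum this
      rw [hsplit]
      linarith
    -- from blocks to averages at multiples of P
    have hPR : ((P:ℕ) : ℝ) = (k:ℝ) + (D:ℝ) - 1 := by
      rw [hPdef]
      push_cast [Nat.cast_sub hk1]
      ring
    have hc0 : ((P:ℕ) : ℝ) * (δ - 3*ε) ≤ (k:ℝ) * (δ - 2*ε) - ((D:ℝ) - 1) * M := by
      have hD1 : (1:ℝ) ≤ (D:ℝ) := by exact_mod_cast hD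
      rw [hPR]
      nlinarith [hkε, hδM, hM0, hε, hD1]
    have hNP : ∀ (x : X) (N : ℕ), 1 ≤ N → δ - 3*ε ≤ birk2 (⇑T) (⇑S) f (N*P) x y' := by
      intro x N hN
      rw [hbirk]
      have hsum : ∀ m : ℕ, ∑ j ∈ Finset.range (m*P), f ((⇑T)^[j] x, (⇑S)^[j] y')
          = ∑ t ∈ Finset.range m, ∑ s ∈ Finset.range P,
              f ((⇑T)^[t*P + s] x, (⇑S)^[s] y') := by
        intro m
        induction m with
        | zero => simp
        | succ m ih =>
          rw [show (m+1)*P = m*P + P by ring, Finset.sum_range_add, ih,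
            Finset.sum_range_succ]
          congr 1
          refine Finset.sum_congr rfl fun s _ => ?_
          congr 1
          rw [add_comm (m*P) s, hperS]
      rw [hsum N]
      have hlow : ((N:ℝ) * (P:ℝ)) * (δ - 3*ε)
          ≤ ∑ t ∈ Finset.range N, ∑ s ∈ Finset.range P,
              f ((⇑T)^[t*P + s] x, (⇑S)^[s] y') := by
        calc ((N:ℝ) * (P:ℝ)) * (δ - 3*ε)
            = ∑ _t ∈ Finset.range N, ((P:ℝ) * (δ - 3*ε)) := by
              simp [Finset.sum_const, Finset.card_range]; ring
          _ ≤ ∑ t ∈ Finset.range N, ∑ s ∈ Finset.range P,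
              f ((⇑T)^[t*P + s] x, (⇑S)^[s] y') := by
              refine Finset.sum_le_sum fun t _ => ?_
              exact le_trans hc0 (hblock x t)
      have hNPR : (0:ℝ) < ((N*P : ℕ) : ℝ) := by
        have : 0 < N*P := by positivity
        exact_mod_cast this
      have h2 : δ - 3*ε = ((N*P:ℕ):ℝ)⁻¹ * (((N:ℝ) * (P:ℝ)) * (δ - 3*ε)) := by
        push_cast
        field_simp
      rw [h2]
      exact mul_le_mul_of_nonneg_left hlow (by positivity)
    -- a periodic point for T, giving a regular pair (x₀, y')
    obtain ⟨x₀, p, hp, hx₀⟩ := hper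
    set q : ℕ := p * P with hqdef
    have hq : 0 < q := by positivity
    set g : ℕ → ℝ := fun j => f ((⇑T)^[j] x₀, (⇑S)^[j] y') with hgdef
    have hgper : ∀ j, g (j + q) = g j := by
      intro j
      have hT : (⇑T)^[q] x₀ = x₀ := by
        rw [hqdef, Function.iterate_mul]
        exact Function.iterate_fixed hx₀ P
      have hS : (⇑S)^[q] y' = y' := by
        rw [hqdef, mul_comm, Function.iterate_mul]
        exact Function.iterate_fixed hyP p
      simp only [hgdef, Function.iterate_add_apply, hT, hS]
    have hconv : Tendsto (fun n : ℕ => birk2 (⇑T) (⇑S) f n x₀ y') atTop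
        (𝓝 ((q:ℝ)⁻¹ * ∑ j ∈ Finset.range q, g j)) := by
      refine (periodic_avg_tendsto' g q hq hgper).congr fun n => ?_
      rw [hbirk, hgdef]
    set L₀ : ℝ := (q:ℝ)⁻¹ * ∑ j ∈ Finset.range q, g j with hL₀def
    have hreg : (x₀, y') ∈ reg2 (⇑T) (⇑S) f := ⟨L₀, hconv⟩
    set SL : Set ℝ := {L | ∃ x : X, (x, y') ∈ reg2 (⇑T) (⇑S) f ∧
      Tendsto (fun k : ℕ => birk2 (⇑T) (⇑S) f k x y') atTop (𝓝 L)} with hSLdef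
    have hSLne : L₀ ∈ SL := ⟨x₀, hreg, hconv⟩
    have hSLlb : ∀ L ∈ SL, δ - 3*ε ≤ L := by
      rintro L ⟨x, -, hL⟩
      have hcomp : Tendsto (fun N : ℕ => birk2 (⇑T) (⇑S) f (N*P) x y') atTop (𝓝 L) :=
        hL.comp (tendsto_atTop_mono (fun N => Nat.le_mul_of_pos_right N hP1) tendsto_id)
      exact ge_of_tendsto hcomp (eventually_atTop.2 ⟨1, fun N hN => hNP x N hN⟩)
    have hr1 : δ - 3*ε ≤ sInf SL := le_csInf ⟨L₀, hSLne⟩ hSLlb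
    have hrmem : sInf SL ∈ {r : ℝ | ∃ y : Y, (∃ x : X, (x, y) ∈ reg2 (⇑T) (⇑S) f) ∧
        r = sInf {L | ∃ x : X, (x, y) ∈ reg2 (⇑T) (⇑S) f ∧
          Tendsto (fun k : ℕ => birk2 (⇑T) (⇑S) f k x y) atTop (𝓝 L)}} :=
      ⟨y', ⟨x₀, hreg⟩, by rw [hSLdef]⟩
    have hbdda : BddAbove {r : ℝ | ∃ y : Y, (∃ x : X, (x, y) ∈ reg2 (⇑T) (⇑S) f) ∧
        r = sInf {L | ∃ x : X, (x, y) ∈ reg2 (⇑T) (⇑S) f ∧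
          Tendsto (fun k : ℕ => birk2 (⇑T) (⇑S) f k x y) atTop (𝓝 L)}} := by
      refine ⟨M, ?_⟩
      rintro r ⟨y'', ⟨x'', L'', hL''⟩, rfl⟩
      have hmem : L'' ∈ {L | ∃ x : X, (x, y'') ∈ reg2 (⇑T) (⇑S) f ∧
          Tendsto (fun k : ℕ => birk2 (⇑T) (⇑S) f k x y'') atTop (𝓝 L)} :=
        ⟨x'', ⟨L'', hL''⟩, hL''⟩
      have hbb : BddBelow {L : ℝ | ∃ x : X, (x, y'') ∈ reg2 (⇑T) (⇑S) f ∧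
          Tendsto (fun k : ℕ => birk2 (⇑T) (⇑S) f k x y'') atTop (𝓝 L)} := by
        refine ⟨-M, ?_⟩
        rintro L ⟨x, -, hL⟩
        exact ge_of_tendsto hL (Eventually.of_forall fun n => (abs_le.1 (habs n x y'')).1)
      refine le_trans (csInf_le hbb hmem) ?_
      exact le_of_tendsto hL'' (Eventually.of_forall fun n => (abs_le.1 (habs n x'' y'')).2)
    have hbeta : sInf SL ≤ beta2 (⇑T) (⇑S) f := le_csSup hbdda hrmem
    linarith
  refine le_of_forall_pos_le_add fun ε hε => ?_
  have := key (ε/3) (by linarith)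
  linarith
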